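/- If a bijection ψ of the set of pure states of a Hilbert space extends to a linear trace-preserving map on finite-rank Hermitian operators (i.e., ψ is affine), then ψ preserves transition probabilities: Tr(ψ(ρ₁)ψ(ρ₂)) = Tr(ρ₁ρ₂) for all pure states ρ₁, ρ₂. -/

import Mathlib

open scoped ComplexOrder
open Matrix

/-- A pure state: a rank-one orthogonal projection. -/
def IsPureState {n : ℕ} (ρ : Matrix (Fin n) (Fin n) ℂ) : Prop :=
  ρ.IsHermitian ∧ ρ * ρ = ρ ∧ ρ.trace = 1

variable {n : ℕ}

noncomputable def outer (x : Fin n → ℂ) : Matrix (Fin n) (Fin n) ℂ := vecMulVec x (star x)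

noncomputable def ip (x y : Fin n → ℂ) : ℂ := dotProduct (star x) y

lemma outer_apply (x : Fin n → ℂ) (i j) : outer x i j = x i * (starRingEnd ℂ) (x j) := rfl

lemma ip_def (x y : Fin n → ℂ) : ip x y = ∑ i, (starRingEnd ℂ) (x i) * y i := rfl

lemma ip_conj (x y : Fin n → ℂ) : ip y x = (starRingEnd ℂ) (ip x y) := by
  simp [ip_def, map_sum, mul_comm]

lemma ip_self_nonneg (x : Fin n → ℂ) : 0 ≤ ip x x := by
  simp only [ip_def]
  apply Finset.sum_nonneg
  intro i _
  simpa using star_mul_self_nonneg (x i)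

lemma outer_hermitian (x : Fin n → ℂ) : (outer x).IsHermitian := by
  ext i j
  simp [IsHermitian, conjTranspose_apply, outer_apply, mul_comm]

lemma outer_mul_outer (x y : Fin n → ℂ) :
    outer x * outer y = ip x y • vecMulVec x (star y) := by
  ext i j
  simp only [mul_apply, outer_apply, Matrix.smul_apply, ip_def, smul_eq_mul, vecMulVec_apply,
    Pi.star_apply, RCLike.star_def, Finset.sum_mul]
  exact Finset.sum_congr rfl fun k _ => by ring

lemma trace_outer (x : Fin n → ℂ) : (outer x).trace = ip x x := by
  simp [trace, diag, outer_apply, ip_def, mul_comm]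

lemma trace_outer_mul_outer (x y : Fin n → ℂ) :
    (outer x * outer y).trace = ip x y * (starRingEnd ℂ) (ip x y) := by
  rw [outer_mul_outer, trace_smul]
  have : (vecMulVec x (star y)).trace = ip y x := by
    simp [trace, diag, vecMulVec_apply, ip_def, mul_comm]
  rw [this, ip_conj]
  simp [smul_eq_mul]

lemma isPureState_outer {x : Fin n → ℂ} (hx : ip x x = 1) : IsPureState (outer x) := by
  refine ⟨outer_hermitian x, ?_, by rw [trace_outer, hx]⟩
  rw [outer_mul_outer, hx, one_smul]
  rfl

lemma outer_mulVec (x z : Fin n → ℂ) : outer x *ᵥ z = ip x z • x := by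
  ext i
  simp [mulVec, dotProduct, outer_apply, ip_def, Finset.sum_mul, Finset.mul_sum, mul_comm,
    mul_left_comm]

lemma dot_outer (x z : Fin n → ℂ) :
    dotProduct (star z) (outer x *ᵥ z) = (starRingEnd ℂ) (ip x z) * ip x z := by
  rw [outer_mulVec, dotProduct_smul]
  have : dotProduct (star z) x = ip z x := rfl
  rw [smul_eq_mul, this, ip_conj, mul_comm]
  rw [Complex.conj_conj]

lemma conj_mul_self_nonneg (a : ℂ) : 0 ≤ (starRingEnd ℂ) a * a := by
  simpa using star_mul_self_nonneg a

lemma posSemidef_smul {A : Matrix (Fin n) (Fin n) ℂ} (hA : A.PosSemidef) {c : ℝ} (hc : 0 ≤ c) :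
    (c • A).PosSemidef := by
  refine Matrix.PosSemidef.of_dotProduct_mulVec_nonneg ?_ ?_
  · ext i j
    simp only [conjTranspose_apply, Matrix.smul_apply]
    rw [star_smul, star_trivial, ← conjTranspose_apply, hA.1]
  · intro z
    have h2 := hA.dotProduct_mulVec_nonneg z
    have : dotProduct (star z) ((c • A) *ᵥ z) = (c : ℂ) * dotProduct (star z) (A *ᵥ z) := by
      simp [mulVec, dotProduct, Finset.mul_sum, Complex.real_smul, mul_assoc, mul_left_comm,
        Finset.sum_mul]
    rw [this]
    exact mul_nonneg (by exact_mod_cast Complex.zero_le_real.mpr hc) h2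

lemma posSemidef_outer (x : Fin n → ℂ) : (outer x).PosSemidef := by
  refine Matrix.PosSemidef.of_dotProduct_mulVec_nonneg (outer_hermitian x) fun z => ?_
  rw [dot_outer]
  exact conj_mul_self_nonneg _

lemma ip_inner (x y : Fin n → ℂ) :
    ip x y = inner (𝕜 := ℂ) ((WithLp.equiv 2 (Fin n → ℂ)).symm x)
      ((WithLp.equiv 2 (Fin n → ℂ)).symm y) := by
  simp [ip_def, PiLp.inner_apply, RCLike.inner_apply, mul_comm]

lemma ip_self_eq_norm_sq (x : Fin n → ℂ) :
    ip x x = ((‖(WithLp.equiv 2 (Fin n → ℂ)).symm x‖ ^ 2 : ℝ) : ℂ) := by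
  rw [ip_inner]
  exact_mod_cast inner_self_eq_norm_sq_to_K (𝕜 := ℂ) _

lemma conj_mul_self_eq (a : ℂ) : (starRingEnd ℂ) a * a = ((‖a‖ ^ 2 : ℝ) : ℂ) := by
  rw [mul_comm, Complex.mul_conj']
  norm_cast

lemma norm_of_unit {x : Fin n → ℂ} (hx : ip x x = 1) :
    ‖(WithLp.equiv 2 (Fin n → ℂ)).symm x‖ = 1 := by
  have := ip_self_eq_norm_sq x
  rw [hx] at this
  have h2 : (‖(WithLp.equiv 2 (Fin n → ℂ)).symm x‖ ^ 2 : ℝ) = 1 := by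
    exact_mod_cast this.symm
  nlinarith [norm_nonneg ((WithLp.equiv 2 (Fin n → ℂ)).symm x)]

lemma ip_cauchy_schwarz {x : Fin n → ℂ} (hx : ip x x = 1) (w : Fin n → ℂ) :
    (starRingEnd ℂ) (ip x w) * ip x w ≤ ip w w := by
  rw [conj_mul_self_eq, ip_self_eq_norm_sq]
  rw [Complex.real_le_real]
  have h := norm_inner_le_norm (𝕜 := ℂ) ((WithLp.equiv 2 (Fin n → ℂ)).symm x)
    ((WithLp.equiv 2 (Fin n → ℂ)).symm w)
  rw [← ip_inner, norm_of_unit hx, one_mul] at h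
  nlinarith [norm_nonneg (ip x w), norm_nonneg ((WithLp.equiv 2 (Fin n → ℂ)).symm w)]

lemma norm_ip_le_one {x y : Fin n → ℂ} (hx : ip x x = 1) (hy : ip y y = 1) :
    ‖ip x y‖ ≤ 1 := by
  have h := norm_inner_le_norm (𝕜 := ℂ) ((WithLp.equiv 2 (Fin n → ℂ)).symm x)
    ((WithLp.equiv 2 (Fin n → ℂ)).symm y)
  rwa [← ip_inner, norm_of_unit hx, norm_of_unit hy, one_mul] at h

lemma rc_ofReal (r : ℝ) : (RCLike.ofReal r : ℂ) = ((r:ℂ)) := rfl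

lemma spectral_decomp {A : Matrix (Fin n) (Fin n) ℂ} (hA : A.IsHermitian) :
    A = ∑ i, hA.eigenvalues i • outer (fun k => hA.eigenvectorBasis i k) ∧
      (∀ i, ip (fun k => hA.eigenvectorBasis i k) (fun k => hA.eigenvectorBasis i k) = 1) := by
  constructor
  · conv_lhs => rw [hA.spectral_theorem]
    ext a b
    simp only [mul_apply, diagonal_apply, Function.comp_apply, Matrix.sum_apply, Matrix.smul_apply, Unitary.conjStarAlgAut_apply,
      IsHermitian.eigenvectorUnitary_apply, outer_apply, mul_ite, mul_zero,
      Finset.sum_ite_eq, Finset.sum_ite_eq', Finset.mem_univ, if_true]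
    refine Finset.sum_congr rfl fun i _ => ?_
    rw [Complex.real_smul]
    simp only [Matrix.star_apply, IsHermitian.eigenvectorUnitary_apply, RCLike.star_def]
    simp only [rc_ofReal]
    ring
  · intro i
    have horth := orthonormal_iff_ite.mp hA.eigenvectorBasis.orthonormal i i
    simp only [if_pos rfl] at horth
    rw [ip_inner]
    exact horth

lemma psd_trace_zero {A : Matrix (Fin n) (Fin n) ℂ} (hA : A.PosSemidef) (h : A.trace = 0) :
    A = 0 := by
  exact hA.trace_eq_zero_iff.mp h

lemma dot_conjTranspose (M : Matrix (Fin n) (Fin n) ℂ) (z w : Fin n → ℂ) :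
    dotProduct (star z) (Mᴴ *ᵥ w) = ip (M *ᵥ z) w := by
  simp only [ip_def, dotProduct, mulVec, conjTranspose_apply, Pi.star_apply, RCLike.star_def,
    map_sum, _root_.map_mul, Finset.mul_sum, Finset.sum_mul]
  rw [Finset.sum_comm]
  refine Finset.sum_congr rfl fun k _ => Finset.sum_congr rfl fun j _ => by ring

lemma pure_eq_outer {ρ : Matrix (Fin n) (Fin n) ℂ} (h : IsPureState ρ) :
    ∃ x, ip x x = 1 ∧ ρ = outer x := by
  obtain ⟨hherm, hidem, htr⟩ := h
  have hpsd : ρ.PosSemidef := by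
    have := Matrix.posSemidef_conjTranspose_mul_self ρ
    rwa [hherm, hidem] at this
  -- diagonal entries nonneg
  have hdiag : ∀ i, 0 ≤ ρ i i := by
    intro i
    have := hpsd.dotProduct_mulVec_nonneg (Pi.single i 1)
    simpa [mulVec, dotProduct, Pi.single_apply] using this
  -- find i with ρ i i ≠ 0
  have hex : ∃ i, ρ i i ≠ 0 := by
    by_contra hc
    push_neg at hc
    have : ρ.trace = 0 := by simp [trace, diag, hc]
    rw [htr] at this
    exact one_ne_zero this
  obtain ⟨i, hi⟩ := hex
  have hdi := hdiag i
  have hsym : ∀ a b, ρ a b = (starRingEnd ℂ) (ρ b a) := fun a b => by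
    have h1 := congrFun (congrFun hherm a) b
    rw [← h1, Matrix.conjTranspose_apply]
    rfl
  -- d := (ρ i i).re : positive real, ρ i i = d
  have him : (ρ i i).im = 0 := by
    rcases Complex.le_def.mp hdi with ⟨_, h2⟩
    simpa using h2.symm
  set d : ℝ := (ρ i i).re with hd
  have hdeq : ρ i i = (d : ℂ) := by
    apply Complex.ext <;> simp [hd, him]
  have hdpos : 0 < d := by
    rcases lt_or_eq_of_le (Complex.le_def.mp hdi).1 with h | h
    · simpa using h
    · exfalso
      apply hi
      have hd0 : d = 0 := by rw [hd, ← h]; simp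
      rw [hdeq, hd0]
      simp
  set r : ℝ := Real.sqrt d with hr
  have hrpos : 0 < r := Real.sqrt_pos.mpr hdpos
  have hr2 : (r : ℂ) * (r : ℂ) = (d : ℂ) := by
    norm_cast
    rw [hr, Real.mul_self_sqrt hdpos.le]
  set x : Fin n → ℂ := fun j => ρ j i * (r : ℂ)⁻¹ with hx
  -- key : ∑ j, conj (ρ j i) * ρ j i = ρ i i
  have hcol : ∑ j, (starRingEnd ℂ) (ρ j i) * ρ j i = (d : ℂ) := by
    have h1 : (ρ * ρ) i i = ∑ j, (starRingEnd ℂ) (ρ j i) * ρ j i := by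
      rw [Matrix.mul_apply]
      refine Finset.sum_congr rfl fun j _ => ?_
      rw [hsym i j]
    rw [← h1, hidem, hdeq]
  have hxx : ip x x = 1 := by
    rw [ip_def]
    have : ∀ j, (starRingEnd ℂ) (x j) * x j
        = ((starRingEnd ℂ) (ρ j i) * ρ j i) * ((r:ℂ)⁻¹ * (r:ℂ)⁻¹) := by
      intro j
      simp only [hx, _root_.map_mul]
      have : (starRingEnd ℂ) ((r:ℂ)⁻¹) = (r:ℂ)⁻¹ := by
        rw [map_inv₀, Complex.conj_ofReal]
      rw [this]; ring
    simp only [this, ← Finset.sum_mul, hcol]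
    rw [← hr2]
    have hrne : (r : ℂ) ≠ 0 := by
      norm_cast; exact hrpos.ne'
    field_simp
  refine ⟨x, hxx, ?_⟩
  -- show ρ - outer x is PSD with trace 0
  have houter_tr : (outer x).trace = 1 := by rw [trace_outer, hxx]
  have hAtr : (ρ - outer x).trace = 0 := by
    rw [Matrix.trace_sub, htr, houter_tr, sub_self]
  have hAherm : (ρ - outer x).IsHermitian := hherm.sub (outer_hermitian x)
  have hApsd : (ρ - outer x).PosSemidef := by
    refine Matrix.PosSemidef.of_dotProduct_mulVec_nonneg hAherm fun z => ?_
    rw [Matrix.sub_mulVec, dotProduct_sub, dot_outer]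
    -- let w := ρ *ᵥ z ; ip x z = w i / r and star z ⬝ᵥ w = ip w w
    set w : Fin n → ℂ := ρ *ᵥ z with hw
    have hQ : dotProduct (star z) (ρ *ᵥ z) = ip w w := by
      have h1 : ρᴴ * ρ = ρ := by rw [hherm, hidem]
      calc dotProduct (star z) (ρ *ᵥ z) = dotProduct (star z) ((ρᴴ * ρ) *ᵥ z) := by rw [h1]
        _ = dotProduct (star z) (ρᴴ *ᵥ (ρ *ᵥ z)) := by rw [Matrix.mulVec_mulVec]
        _ = ip w w := dot_conjTranspose ρ z w
    have hsx : ip x w = ip x z := by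
      -- ip x w = (ρ *ᵥ w) i / r = (ρ * ρ *ᵥ z) i / r = w i / r ; ip x z = w i / r
      have h1 : ∀ v : Fin n → ℂ, ip x v = (r:ℂ)⁻¹ * (ρ *ᵥ v) i := by
        intro v
        rw [ip_def]
        simp only [hx, _root_.map_mul, mulVec, dotProduct]
        have hconjr : (starRingEnd ℂ) ((r:ℂ)⁻¹) = (r:ℂ)⁻¹ := by
          rw [map_inv₀, Complex.conj_ofReal]
        rw [Finset.mul_sum]
        refine Finset.sum_congr rfl fun j _ => ?_
        rw [hconjr, ← hsym i j]
        ring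
      rw [h1 w, h1 z, hw, Matrix.mulVec_mulVec, hidem]
    rw [← hsx]
    have := ip_cauchy_schwarz hxx w
    rw [hQ]
    exact sub_nonneg.mpr this
  have := psd_trace_zero hApsd hAtr
  have : ρ - outer x = 0 := this
  ext a b
  have := congrFun (congrFun this a) b
  simpa [Matrix.sub_apply, sub_eq_zero] using this

lemma ip_add_left (x y z : Fin n → ℂ) : ip (x + y) z = ip x z + ip y z := by
  simp [ip_def, Finset.sum_add_distrib, add_mul]

lemma ip_add_right (x y z : Fin n → ℂ) : ip z (x + y) = ip z x + ip z y := by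
  simp [ip_def, Finset.sum_add_distrib, mul_add]

lemma ip_smul_left (c : ℂ) (x z : Fin n → ℂ) : ip (c • x) z = (starRingEnd ℂ) c * ip x z := by
  simp only [ip_def, Pi.smul_apply, smul_eq_mul, _root_.map_mul, Finset.mul_sum]
  exact Finset.sum_congr rfl fun i _ => by ring

lemma ip_smul_right (c : ℂ) (x z : Fin n → ℂ) : ip z (c • x) = c * ip z x := by
  simp only [ip_def, Pi.smul_apply, smul_eq_mul, Finset.mul_sum]
  exact Finset.sum_congr rfl fun i _ => by ring

lemma outer_unit_smul {c : ℂ} (hc : ‖c‖ = 1) (x : Fin n → ℂ) : outer (c • x) = outer x := by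
  ext i j
  simp only [outer_apply, Pi.smul_apply, smul_eq_mul, _root_.map_mul]
  have h1 : c * (starRingEnd ℂ) c = 1 := by
    rw [mul_comm, conj_mul_self_eq, hc]
    norm_num
  calc c * x i * ((starRingEnd ℂ) c * (starRingEnd ℂ) (x j))
      = (c * (starRingEnd ℂ) c) * (x i * (starRingEnd ℂ) (x j)) := by ring
    _ = x i * (starRingEnd ℂ) (x j) := by rw [h1, one_mul]

/-- L2 : for unit vectors, |⟨x,u⟩|² + |⟨y,u⟩|² ≤ 1 + |⟨x,y⟩|. -/
lemma L2 {x y u : Fin n → ℂ} (hx : ip x x = 1) (hy : ip y y = 1) (hu : ip u u = 1) :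
    ‖ip x u‖ ^ 2 + ‖ip y u‖ ^ 2 ≤ 1 + ‖ip x y‖ := by
  set α := ip x u with hα
  set β := ip y u with hβ
  set t : ℝ := ‖α‖ ^ 2 + ‖β‖ ^ 2 with ht
  set w : Fin n → ℂ := α • x + β • y with hwdef
  have hwu : ip w u = ((t : ℝ) : ℂ) := by
    rw [hwdef, ip_add_left, ip_smul_left, ip_smul_left, ← hα, ← hβ, conj_mul_self_eq,
      conj_mul_self_eq, ht]
    push_cast
    ring
  have hww : ip w w = ((t : ℝ) : ℂ) + ((starRingEnd ℂ) α * β * ip x y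
      + (starRingEnd ℂ) ((starRingEnd ℂ) α * β * ip x y)) := by
    rw [hwdef]
    simp only [ip_add_left, ip_add_right, ip_smul_left, ip_smul_right]
    rw [hx, hy, ip_conj x y]
    have e1 : α * (starRingEnd ℂ) α = ((‖α‖ ^ 2 : ℝ) : ℂ) := by
      rw [mul_comm]; exact conj_mul_self_eq α
    have e2 : β * (starRingEnd ℂ) β = ((‖β‖ ^ 2 : ℝ) : ℂ) := by
      rw [mul_comm]; exact conj_mul_self_eq β
    simp only [_root_.map_mul, Complex.conj_conj, ht]
    push_cast at e1 e2 ⊢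
    linear_combination e1 + e2
  -- real part bound
  have hre : (ip w w).re ≤ t + 2 * (‖α‖ * ‖β‖ * ‖ip x y‖) := by
    rw [hww]
    have h1 : (((t : ℝ) : ℂ) + ((starRingEnd ℂ) α * β * ip x y
        + (starRingEnd ℂ) ((starRingEnd ℂ) α * β * ip x y))).re
        = t + 2 * ((starRingEnd ℂ) α * β * ip x y).re := by
      simp [Complex.add_re, Complex.conj_re]
      ring
    rw [h1]
    have h2 : ((starRingEnd ℂ) α * β * ip x y).re ≤ ‖(starRingEnd ℂ) α * β * ip x y‖ :=
      Complex.re_le_norm _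
    have h3 : ‖(starRingEnd ℂ) α * β * ip x y‖ = ‖α‖ * ‖β‖ * ‖ip x y‖ := by
      simp [norm_mul]
    nlinarith
  -- Cauchy–Schwarz : ‖ip w u‖ ≤ ‖W‖ * ‖U‖
  have hcs : t ^ 2 ≤ (ip w w).re := by
    have h := norm_inner_le_norm (𝕜 := ℂ) ((WithLp.equiv 2 (Fin n → ℂ)).symm w)
      ((WithLp.equiv 2 (Fin n → ℂ)).symm u)
    rw [← ip_inner, norm_of_unit hu, mul_one] at h
    have hwnorm : (ip w w).re = ‖(WithLp.equiv 2 (Fin n → ℂ)).symm w‖ ^ 2 := by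
      rw [ip_self_eq_norm_sq]
      norm_cast
    have htnn : (0:ℝ) ≤ t := by positivity
    have h4 : ‖ip w u‖ = t := by
      rw [hwu]
      simp [abs_of_nonneg htnn]
    rw [h4] at h
    rw [hwnorm]
    nlinarith [norm_nonneg ((WithLp.equiv 2 (Fin n → ℂ)).symm w)]
  have h2ab : 2 * (‖α‖ * ‖β‖) ≤ t := by nlinarith [sq_nonneg (‖α‖ - ‖β‖)]
  have hs0 : (0:ℝ) ≤ ‖ip x y‖ := norm_nonneg _
  have htnn : (0:ℝ) ≤ t := by positivity
  -- t² ≤ t + t * s  ⟹  t ≤ 1 + s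
  have hkey : t ^ 2 ≤ t * (1 + ‖ip x y‖) := by nlinarith
  rw [ht] at hkey htnn ⊢
  nlinarith

lemma herm_real_smul {A : Matrix (Fin n) (Fin n) ℂ} (hA : A.IsHermitian) (c : ℝ) :
    (c • A).IsHermitian := by
  ext i j
  simp only [conjTranspose_apply, Matrix.smul_apply]
  rw [star_smul, star_trivial, ← conjTranspose_apply, hA]

/-- L1 : exists a pure direction witnessing the top eigenvalue 1 + |⟨x,y⟩| of P + Q. -/
lemma L1 {x y : Fin n → ℂ} (hx : ip x x = 1) (hy : ip y y = 1) :
    ∃ u, ip u u = 1 ∧ (outer x + outer y - (1 + ‖ip x y‖) • outer u).PosSemidef := by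
  set g := ip x y with hg
  set s : ℝ := ‖g‖ with hs
  have hs0 : 0 ≤ s := norm_nonneg _
  set τ : ℂ := if g = 0 then 1 else g / (s : ℂ) with hτdef
  have hsne : g ≠ 0 → s ≠ 0 := fun h => by simpa [hs] using norm_ne_zero_iff.mpr h
  have hnorms : ‖((s:ℝ):ℂ)‖ = s := by
    rw [Complex.norm_real, Real.norm_eq_abs, abs_of_nonneg hs0]
  have hτ : ‖τ‖ = 1 := by
    rw [hτdef]
    by_cases h : g = 0
    · rw [if_pos h]; norm_num
    · rw [if_neg h, norm_div, hnorms, ← hs]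
      have := hsne h
      rw [hs] at this ⊢
      exact div_self this
  have hτg : (starRingEnd ℂ) τ * g = ((s:ℝ):ℂ) := by
    rw [hτdef]
    by_cases h : g = 0
    · have hs' : s = 0 := by rw [hs, h]; simp
      rw [if_pos h, _root_.map_one, one_mul, h, hs']
      simp
    · rw [if_neg h, map_div₀, Complex.conj_ofReal]
      have hgg : (starRingEnd ℂ) g * g = ((‖g‖^2 : ℝ):ℂ) := conj_mul_self_eq g
      have hsne' : ((s:ℝ):ℂ) ≠ 0 := by
        exact_mod_cast Complex.ofReal_ne_zero.mpr (hsne h)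
      field_simp
      rw [hgg, hs]
      push_cast
      ring
  set x' : Fin n → ℂ := τ • x with hx'def
  have hox : outer x' = outer x := outer_unit_smul hτ x
  have hx' : ip x' x' = 1 := by
    rw [hx'def, ip_smul_left, ip_smul_right, hx, mul_one, conj_mul_self_eq, hτ]
    norm_num
  have hx'y : ip x' y = ((s:ℝ):ℂ) := by
    rw [hx'def, ip_smul_left, ← hg, hτg]
  have h22 : (0:ℝ) < 2 + 2 * s := by linarith
  set r : ℝ := (Real.sqrt (2 + 2 * s))⁻¹ with hr
  have hrpos : 0 < r := by
    rw [hr]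
    exact inv_pos.mpr (Real.sqrt_pos.mpr h22)
  have hr2 : r ^ 2 * (2 + 2 * s) = 1 := by
    rw [hr, inv_pow, Real.sq_sqrt h22.le]
    field_simp
  set u : Fin n → ℂ := (r:ℂ) • (x' + y) with hu
  have hipsum : ip (x' + y) (x' + y) = ((2 + 2*s : ℝ):ℂ) := by
    rw [ip_add_left, ip_add_right, ip_add_right, hx', hy, hx'y, ip_conj x' y, hx'y]
    rw [Complex.conj_ofReal]
    push_cast
    ring
  have huu : ip u u = 1 := by
    rw [hu, ip_smul_left, ip_smul_right, Complex.conj_ofReal, hipsum]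
    have : ((r:ℝ):ℂ) * (((r:ℝ):ℂ) * ((2 + 2*s : ℝ):ℂ)) = ((r^2 * (2+2*s) : ℝ) : ℂ) := by
      push_cast; ring
    rw [this, hr2]
    norm_num
  refine ⟨u, huu, ?_⟩
  have hherm : (outer x + outer y - (1 + ‖ip x y‖) • outer u).IsHermitian := by
    exact ((outer_hermitian x).add (outer_hermitian y)).sub
      (herm_real_smul (outer_hermitian u) _)
  refine Matrix.PosSemidef.of_dotProduct_mulVec_nonneg hherm fun z => ?_
  rw [← hox]
  set a := ip x' z with ha
  set b := ip y z with hb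
  have hcz : ip u z = (r:ℂ) * (a + b) := by
    rw [hu, ip_smul_left, Complex.conj_ofReal, ip_add_left, ha, hb]
  have hquad : dotProduct (star z) ((outer x' + outer y - (1 + ‖ip x y‖) • outer u) *ᵥ z)
      = ((‖a - b‖^2 / 2 : ℝ) : ℂ) := by
    rw [Matrix.sub_mulVec, Matrix.add_mulVec, dotProduct_sub, dotProduct_add,
      Matrix.smul_mulVec, dotProduct_smul, dot_outer, dot_outer, dot_outer, hcz]
    rw [← ha, ← hb, ← hg, ← hs]
    have hch : ((1:ℝ) + s) • ((starRingEnd ℂ) ((r:ℂ) * (a+b)) * ((r:ℂ) * (a+b)))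
        = (((1+s) * r^2 : ℝ) : ℂ) * ((starRingEnd ℂ) (a+b) * (a+b)) := by
      rw [Complex.real_smul, _root_.map_mul, Complex.conj_ofReal]
      push_cast
      ring
    rw [hch]
    have hhalf : (((1+s) * r^2 : ℝ) : ℂ) = ((1/2 : ℝ) : ℂ) := by
      norm_cast
      nlinarith [hr2]
    rw [hhalf]
    have e1 : (starRingEnd ℂ) (a - b) * (a - b) = ((‖a - b‖^2 : ℝ) : ℂ) := conj_mul_self_eq _
    have e2 : (starRingEnd ℂ) a * a = ((‖a‖^2 : ℝ) : ℂ) := conj_mul_self_eq _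
    have e3 : (starRingEnd ℂ) b * b = ((‖b‖^2 : ℝ) : ℂ) := conj_mul_self_eq _
    simp only [map_sub, map_add] at e1 ⊢
    push_cast at e1 e2 e3 ⊢
    linear_combination (1/2 : ℂ) * e1
  rw [hquad]
  rw [show ((0:ℂ) = ((0:ℝ):ℂ)) from by norm_num, Complex.real_le_real]
  positivity

lemma pure_psd {ρ : Matrix (Fin n) (Fin n) ℂ} (h : IsPureState ρ) : ρ.PosSemidef := by
  obtain ⟨hherm, hidem, -⟩ := h
  have := Matrix.posSemidef_conjTranspose_mul_self ρ
  rwa [hherm, hidem] at this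

lemma posSemidef_sum {ι : Type*} (s : Finset ι) (f : ι → Matrix (Fin n) (Fin n) ℂ)
    (h : ∀ i ∈ s, (f i).PosSemidef) : (∑ i ∈ s, f i).PosSemidef :=
  Finset.sum_induction f _ (fun _ _ ha hb => ha.add hb) Matrix.PosSemidef.zero h

lemma real_cast_nonneg_iff (r : ℝ) : (0:ℂ) ≤ ((r:ℝ):ℂ) ↔ 0 ≤ r := by
  rw [show ((0:ℂ) = ((0:ℝ):ℂ)) from by norm_num, Complex.real_le_real]

/-- Quadratic form evaluation: if P + Q - c•R ⪰ 0 with R = outer w, w unit,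
then c ≤ |⟨x,w⟩|² + |⟨y,w⟩|². -/
lemma quad_eval {x y w : Fin n → ℂ} (hw : ip w w = 1) (c : ℝ)
    (hpsd : (outer x + outer y - c • outer w).PosSemidef) :
    c ≤ ‖ip x w‖ ^ 2 + ‖ip y w‖ ^ 2 := by
  have h := hpsd.dotProduct_mulVec_nonneg w
  have hq : dotProduct (star w) ((outer x + outer y - c • outer w) *ᵥ w)
      = ((‖ip x w‖ ^ 2 + ‖ip y w‖ ^ 2 - c : ℝ) : ℂ) := by
    rw [Matrix.sub_mulVec, Matrix.add_mulVec, dotProduct_sub, dotProduct_add,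
      Matrix.smul_mulVec, dotProduct_smul, dot_outer, dot_outer, dot_outer, hw]
    rw [conj_mul_self_eq, conj_mul_self_eq, _root_.map_one, mul_one,
      Complex.real_smul]
    push_cast
    ring
  rw [hq, real_cast_nonneg_iff] at h
  linarith

/-- Positivity is preserved by a real-linear map sending pure states to pure states. -/
lemma phi_psd (Φ : Matrix (Fin n) (Fin n) ℂ →ₗ[ℝ] Matrix (Fin n) (Fin n) ℂ)
    (hpure : ∀ ρ, IsPureState ρ → IsPureState (Φ ρ))
    {A : Matrix (Fin n) (Fin n) ℂ} (hA : A.PosSemidef) : (Φ A).PosSemidef := by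
  obtain ⟨hdecomp, hunit⟩ := spectral_decomp hA.1
  rw [hdecomp, map_sum]
  apply _root_.posSemidef_sum
  intro i _
  rw [LinearMap.map_smul]
  exact posSemidef_smul (pure_psd (hpure _ (isPureState_outer (hunit i))))
    (hA.eigenvalues_nonneg i)


/-- If a bijection of the set of pure states extends to a linear
trace-preserving map Φ on Hermitian operators, then it preserves transition
probabilities: Tr(Φ(ρ₁)Φ(ρ₂)) = Tr(ρ₁ρ₂) for all pure states ρ₁, ρ₂. -/
theorem stmt_11 (n : ℕ) (hn : 0 < n)
    (Φ : Matrix (Fin n) (Fin n) ℂ →ₗ[ℝ] Matrix (Fin n) (Fin n) ℂ)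
    (htr : ∀ A, (Φ A).trace = A.trace)
    (hbij : Set.BijOn Φ {ρ | IsPureState ρ} {ρ | IsPureState ρ}) :
    ∀ ρ₁ ρ₂ : Matrix (Fin n) (Fin n) ℂ, IsPureState ρ₁ → IsPureState ρ₂ →
      (Φ ρ₁ * Φ ρ₂).trace = (ρ₁ * ρ₂).trace := by
  intro ρ₁ ρ₂ h₁ h₂
  have hmaps : ∀ ρ, IsPureState ρ → IsPureState (Φ ρ) := fun ρ h => hbij.mapsTo h
  set S : Submodule ℝ (Matrix (Fin n) (Fin n) ℂ) :=
    Submodule.span ℝ {ρ | IsPureState ρ} with hS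
  have himg : Φ '' {ρ | IsPureState ρ} = {ρ | IsPureState ρ} := hbij.image_eq
  have hmapS : Submodule.map Φ S = S := by
    rw [hS, Submodule.map_span, himg]
  have hrestrict : ∀ m ∈ S, Φ m ∈ S := fun m hm => hmapS ▸ Submodule.mem_map_of_mem hm
  have hinj : ∀ M₁ ∈ S, ∀ M₂ ∈ S, Φ M₁ = Φ M₂ → M₁ = M₂ := by
    set f : S →ₗ[ℝ] S := Φ.restrict hrestrict with hf
    have hsurj : Function.Surjective f := by
      rintro ⟨y, hy⟩
      rw [← hmapS] at hy
      obtain ⟨m, hm, hEq⟩ := hy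
      exact ⟨⟨m, hm⟩, Subtype.ext hEq⟩
    have hinjf : Function.Injective f :=
      (LinearMap.injective_iff_surjective (f := f)).mpr hsurj
    intro M₁ hM₁ M₂ hM₂ hEq
    have h5 : f ⟨M₁, hM₁⟩ = f ⟨M₂, hM₂⟩ := Subtype.ext hEq
    simpa using congrArg Subtype.val (hinjf h5)
  obtain ⟨x, hxx, hρ₁⟩ := pure_eq_outer h₁
  obtain ⟨y, hyy, hρ₂⟩ := pure_eq_outer h₂
  obtain ⟨x', hxx', hΦρ₁⟩ := pure_eq_outer (hmaps _ h₁)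
  obtain ⟨y', hyy', hΦρ₂⟩ := pure_eq_outer (hmaps _ h₂)
  rw [hρ₁] at hΦρ₁
  rw [hρ₂] at hΦρ₂
  set s : ℝ := ‖ip x y‖ with hsdef
  set s' : ℝ := ‖ip x' y'‖ with hs'def
  -- direction A : s ≤ s'
  have hssA : s ≤ s' := by
    obtain ⟨u, huu, hpsdA⟩ := L1 hxx hyy
    have hpsdA' : (Φ (outer x + outer y - (1 + s) • outer u)).PosSemidef :=
      phi_psd Φ hmaps hpsdA
    obtain ⟨w, hww, hΦu⟩ := pure_eq_outer (hmaps _ (isPureState_outer huu))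
    have hexp : Φ (outer x + outer y - (1 + s) • outer u)
        = outer x' + outer y' - (1 + s) • outer w := by
      rw [map_sub, map_add, LinearMap.map_smul, hΦρ₁, hΦρ₂, hΦu]
    rw [hexp] at hpsdA'
    have hA1 := quad_eval hww (1 + s) hpsdA'
    have hA2 := L2 hxx' hyy' hww
    rw [← hs'def] at hA2
    linarith
  -- direction B : s' ≤ s
  have hssB : s' ≤ s := by
    obtain ⟨u', huu', hpsdB⟩ := L1 hxx' hyy'
    rw [← hs'def] at hpsdB
    obtain ⟨R₀, hR₀pure, hR₀⟩ := hbij.surjOn (isPureState_outer huu')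
    obtain ⟨v, hvv, hR₀v⟩ := pure_eq_outer hR₀pure
    rw [hR₀v] at hR₀
    set M : Matrix (Fin n) (Fin n) ℂ := outer x + outer y - (1 + s') • outer v with hM
    have hΦM : Φ M = outer x' + outer y' - (1 + s') • outer u' := by
      rw [hM, map_sub, map_add, LinearMap.map_smul, hΦρ₁, hΦρ₂, hR₀]
    have hΦMpsd : (Φ M).PosSemidef := by rw [hΦM]; exact hpsdB
    obtain ⟨hdecomp, hunit⟩ := spectral_decomp hΦMpsd.1
    have hTex : ∀ i : Fin n, ∃ T, IsPureState T ∧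
        Φ T = outer (fun k => hΦMpsd.1.eigenvectorBasis i k) := by
      intro i
      obtain ⟨T, hTpure, hTmap⟩ := hbij.surjOn (isPureState_outer (hunit i))
      exact ⟨T, hTpure, hTmap⟩
    choose T hTpure hTmap using hTex
    set N : Matrix (Fin n) (Fin n) ℂ := ∑ i, hΦMpsd.1.eigenvalues i • T i with hN
    have hΦN : Φ N = Φ M := by
      rw [hN, map_sum]
      refine (Finset.sum_congr rfl fun i _ => ?_).trans hdecomp.symm
      rw [LinearMap.map_smul, hTmap]
    have hpureS : ∀ ρ, IsPureState ρ → ρ ∈ S := fun ρ h => Submodule.subset_span h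
    have hMS : M ∈ S := by
      refine Submodule.sub_mem _ (Submodule.add_mem _ ?_ ?_) (Submodule.smul_mem _ _ ?_)
      · exact hpureS _ (isPureState_outer hxx)
      · exact hpureS _ (isPureState_outer hyy)
      · exact hpureS _ (isPureState_outer hvv)
    have hNS : N ∈ S := by
      refine Submodule.sum_mem _ fun i _ => Submodule.smul_mem _ _ ?_
      exact hpureS _ (hTpure i)
    have hMN : M = N := hinj M hMS N hNS hΦN.symm
    have hNpsd : N.PosSemidef := by
      rw [hN]
      refine _root_.posSemidef_sum _ _ fun i _ => ?_
      exact posSemidef_smul (pure_psd (hTpure i)) (hΦMpsd.eigenvalues_nonneg i)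
    have hMpsd : M.PosSemidef := hMN ▸ hNpsd
    have hB1 := quad_eval hvv (1 + s') (hM ▸ hMpsd)
    have hB2 := L2 hxx hyy hvv
    rw [← hsdef] at hB2
    linarith
  have hss : s = s' := le_antisymm hssA hssB
  rw [hρ₁, hρ₂, hΦρ₁, hΦρ₂, trace_outer_mul_outer, trace_outer_mul_outer,
    mul_comm (ip x' y'), mul_comm (ip x y), conj_mul_self_eq, conj_mul_self_eq,
    ← hsdef, ← hs'def, hss]
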